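/- Let X, Y be square-integrable random variables with Var(Y) ≠ 0 and λ* = Cov(X,Y)/Var(Y). If X = Y almost surely, then λ* = 1 and Var(X - λ*(Y - E[Y])) = 0. More generally, if a family X_ε converges to Y in L², with Var(Y) ≠ 0, then λ*_ε → 1 and Var(X_ε - λ*_ε(Y - E[Y])) → 0 as ε → 0. -/

import Mathlib

open MeasureTheory ProbabilityTheory Filter

set_option linter.unusedSectionVars false

section Helpers
variable {Ω : Type*} [MeasurableSpace Ω] {μ : Measure Ω} [IsProbabilityMeasure μ]

lemma intmul {f g : Ω → ℝ} (hf : MemLp f 2 μ) (hg : MemLp g 2 μ) :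
    Integrable (fun ω => f ω * g ω) μ := by
  have := L2.integrable_inner (𝕜 := ℝ) (hf.toLp f) (hg.toLp g)
  refine this.congr ?_
  filter_upwards [hf.coeFn_toLp, hg.coeFn_toLp] with ω h1 h2
  simp [h1, h2, real_inner_comm, mul_comm]

lemma cauchy {f g : Ω → ℝ} (hf : MemLp f 2 μ) (hg : MemLp g 2 μ) :
    |∫ ω, f ω * g ω ∂μ| ≤ (eLpNorm f 2 μ).toReal * (eLpNorm g 2 μ).toReal := by
  have h1 : (∫ ω, f ω * g ω ∂μ) = inner (𝕜 := ℝ) (hf.toLp f) (hg.toLp g) := by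
    rw [L2.inner_def]
    refine integral_congr_ae ?_
    filter_upwards [hf.coeFn_toLp, hg.coeFn_toLp] with ω h1 h2
    simp [h1, h2, real_inner_comm, mul_comm]
  rw [h1]
  calc |inner (𝕜 := ℝ) (hf.toLp f) (hg.toLp g)| ≤ ‖hf.toLp f‖ * ‖hg.toLp g‖ :=
        abs_real_inner_le_norm _ _
    _ = (eLpNorm f 2 μ).toReal * (eLpNorm g 2 μ).toReal := by
        rw [Lp.norm_toLp _ hf, Lp.norm_toLp _ hg]

lemma normsq {f : Ω → ℝ} (hf : MemLp f 2 μ) :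
    ∫ ω, f ω ^ 2 ∂μ = (eLpNorm f 2 μ).toReal ^ 2 := by
  have h1 : (∫ ω, f ω * f ω ∂μ) = inner (𝕜 := ℝ) (hf.toLp f) (hf.toLp f) := by
    rw [L2.inner_def]
    refine integral_congr_ae ?_
    filter_upwards [hf.coeFn_toLp] with ω h1
    simp [h1]; ring
  have h2 := real_inner_self_eq_norm_sq (hf.toLp f)
  simp_rw [pow_two]
  rw [h1, h2, Lp.norm_toLp _ hf, pow_two]

lemma meanbd {f : Ω → ℝ} (hf : MemLp f 2 μ) :
    |∫ ω, f ω ∂μ| ≤ (eLpNorm f 2 μ).toReal := by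
  have := cauchy hf (memLp_const (μ := μ) (1:ℝ))
  simpa [eLpNorm_const (1:ℝ) two_ne_zero (NeZero.ne μ)] using this

lemma Ntri {f g : Ω → ℝ} (hf : MemLp f 2 μ) (hg : MemLp g 2 μ) :
    (eLpNorm (fun ω => f ω + g ω) 2 μ).toReal ≤
      (eLpNorm f 2 μ).toReal + (eLpNorm g 2 μ).toReal := by
  have h := eLpNorm_add_le hf.aestronglyMeasurable hg.aestronglyMeasurable one_le_two
  calc (eLpNorm (fun ω => f ω + g ω) 2 μ).toReal
      ≤ (eLpNorm f 2 μ + eLpNorm g 2 μ).toReal := by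
        refine ENNReal.toReal_mono ?_ h
        exact ENNReal.add_ne_top.mpr ⟨hf.eLpNorm_ne_top, hg.eLpNorm_ne_top⟩
    _ = (eLpNorm f 2 μ).toReal + (eLpNorm g 2 μ).toReal :=
        ENNReal.toReal_add hf.eLpNorm_ne_top hg.eLpNorm_ne_top

lemma Nconstmul (c : ℝ) (g : Ω → ℝ) :
    (eLpNorm (fun ω => c * g ω) 2 μ).toReal = |c| * (eLpNorm g 2 μ).toReal := by
  have : (fun ω => c * g ω) = c • g := by ext ω; simp
  rw [this, eLpNorm_const_smul]
  simp [ENNReal.toReal_mul, Real.norm_eq_abs, abs_nonneg]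

lemma var_congr {f g : Ω → ℝ} (h : f =ᵐ[μ] g) : variance f μ = variance g μ := by
  unfold ProbabilityTheory.variance ProbabilityTheory.evariance
  congr 1
  refine lintegral_congr_ae ?_
  filter_upwards [h] with ω hω
  rw [hω, integral_congr_ae h]

lemma var_const (c : ℝ) : variance (fun _ : Ω => c) μ = 0 := by
  unfold ProbabilityTheory.variance ProbabilityTheory.evariance
  simp

end Helpers

/-- Covariance of two real random variables. -/
noncomputable def cov {Ω : Type*} [MeasurableSpace Ω] (μ : Measure Ω)
    (X Y : Ω → ℝ) : ℝ :=
  ∫ ω, (X ω - ∫ x, X x ∂μ) * (Y ω - ∫ x, Y x ∂μ) ∂μ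

/-- Asymptotic optimality of the control variate coefficient: if `X = Y` a.s.
then `λ* = 1` and the control variate estimator has zero variance; more
generally if `X_ε → Y` in `L²` as `ε → 0⁺`, then `λ*_ε → 1` and the variance
of the control variate estimator tends to `0`. -/
theorem stmt_10 {Ω : Type*} [MeasurableSpace Ω] (μ : Measure Ω)
    [IsProbabilityMeasure μ] (Y : Ω → ℝ) (hY : MemLp Y 2 μ)
    (hVY : variance Y μ ≠ 0) :
    (∀ X : Ω → ℝ, MemLp X 2 μ → X =ᵐ[μ] Y →
      cov μ X Y / variance Y μ = 1 ∧
      variance (fun ω => X ω - (cov μ X Y / variance Y μ) * (Y ω - ∫ x, Y x ∂μ)) μ = 0) ∧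
    (∀ X : ℝ → Ω → ℝ, (∀ ε, MemLp (X ε) 2 μ) →
      Tendsto (fun ε => eLpNorm (fun ω => X ε ω - Y ω) 2 μ)
        (nhdsWithin 0 (Set.Ioi 0)) (nhds 0) →
      Tendsto (fun ε => cov μ (X ε) Y / variance Y μ)
        (nhdsWithin 0 (Set.Ioi 0)) (nhds 1) ∧
      Tendsto (fun ε =>
          variance (fun ω => X ε ω -
            (cov μ (X ε) Y / variance Y μ) * (Y ω - ∫ x, Y x ∂μ)) μ)
        (nhdsWithin 0 (Set.Ioi 0)) (nhds 0)) := by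
  set mY : ℝ := ∫ x, Y x ∂μ with hmY
  set g : Ω → ℝ := fun ω => Y ω - mY with hgdef
  have hg : MemLp g 2 μ := hY.sub (memLp_const mY)
  set σ : ℝ := (eLpNorm g 2 μ).toReal with hσ
  have hσ0 : 0 ≤ σ := ENNReal.toReal_nonneg
  set V : ℝ := variance Y μ with hV
  have hVpos : 0 < V := lt_of_le_of_ne (variance_nonneg Y μ) (Ne.symm hVY)
  have hgint : ∫ ω, g ω ∂μ = 0 := by
    rw [hgdef]
    rw [integral_sub (hY.integrable one_le_two) (integrable_const mY)]
    simp [hmY]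
  have hVeq : V = ∫ ω, g ω ^ 2 ∂μ := by
    rw [hV, variance_eq_integral hY.aestronglyMeasurable.aemeasurable]
  have hVsq : V = σ ^ 2 := by rw [hVeq, normsq hg]
  -- key identity for the covariance
  have covdiff : ∀ X : Ω → ℝ, MemLp X 2 μ →
      cov μ X Y - V = ∫ ω, (X ω - Y ω) * g ω ∂μ := by
    intro X hX
    have hZ : MemLp (fun ω => X ω - Y ω) 2 μ := hX.sub hY
    have hInt1 : Integrable (fun ω => (X ω - Y ω) * g ω) μ := intmul hZ hg
    have hIntg2 : Integrable (fun ω => g ω * g ω) μ := intmul hg hg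
    have hIntc : Integrable (fun ω => (∫ x, (X x - Y x) ∂μ) * g ω) μ :=
      (hg.integrable one_le_two).const_mul _
    have hmZ : ∫ ω, (X ω - Y ω) ∂μ = (∫ x, X x ∂μ) - mY :=
      integral_sub (hX.integrable one_le_two) (hY.integrable one_le_two)
    have key : ∀ ω, (X ω - ∫ x, X x ∂μ) * (Y ω - mY) =
        (X ω - Y ω) * g ω - (∫ x, (X x - Y x) ∂μ) * g ω + g ω * g ω := by
      intro ω
      rw [hmZ]
      simp only [hgdef]
      ring
    have : cov μ X Y = ∫ ω, ((X ω - Y ω) * g ω - (∫ x, (X x - Y x) ∂μ) * g ω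
        + g ω * g ω) ∂μ := by
      unfold cov
      exact integral_congr_ae (Eventually.of_forall key)
    have hIntsub : Integrable (fun ω => (X ω - Y ω) * g ω
        - (∫ x, (X x - Y x) ∂μ) * g ω) μ := hInt1.sub hIntc
    rw [this, integral_add hIntsub hIntg2, integral_sub hInt1 hIntc,
      integral_const_mul, hgint]
    have : ∫ ω, g ω * g ω ∂μ = V := by
      rw [hVeq]; simp_rw [pow_two]
    rw [this]; ring
  constructor
  · -- part 1
    intro X hX hXY
    have hZ0 : (fun ω => X ω - Y ω) =ᵐ[μ] fun _ => (0:ℝ) := by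
      filter_upwards [hXY] with ω h; simp [h]
    have hcov : cov μ X Y = V := by
      have h := covdiff X hX
      have : ∫ ω, (X ω - Y ω) * g ω ∂μ = 0 := by
        have : ∫ ω, (X ω - Y ω) * g ω ∂μ = ∫ _ω, (0:ℝ) ∂μ := by
          refine integral_congr_ae ?_
          filter_upwards [hZ0] with ω h
          simp [h]
        simpa using this
      linarith [h, this]
    have hone : cov μ X Y / variance Y μ = 1 := by
      rw [hcov, ← hV]; exact div_self hVY
    refine ⟨hone, ?_⟩
    rw [hone]
    have : (fun ω => X ω - 1 * (Y ω - mY)) =ᵐ[μ] fun _ => mY := by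
      filter_upwards [hXY] with ω h; rw [h]; ring
    rw [var_congr this, var_const]
  · -- part 2
    intro X hX hL
    set d : ℝ → ℝ := fun ε => (eLpNorm (fun ω => X ε ω - Y ω) 2 μ).toReal with hd_def
    have hd : Tendsto d (nhdsWithin 0 (Set.Ioi 0)) (nhds 0) := by
      have := (ENNReal.tendsto_toReal ENNReal.zero_ne_top).comp hL
      simpa [hd_def, Function.comp_def] using this
    have hd0 : ∀ ε, 0 ≤ d ε := fun ε => ENNReal.toReal_nonneg
    have covbd : ∀ ε, |cov μ (X ε) Y - V| ≤ d ε * σ := by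
      intro ε
      rw [covdiff (X ε) (hX ε)]
      exact cauchy ((hX ε).sub hY) hg
    set lam : ℝ → ℝ := fun ε => cov μ (X ε) Y / variance Y μ with hlam_def
    have hlambd : ∀ ε, |lam ε - 1| ≤ d ε * σ / V := by
      intro ε
      have : lam ε - 1 = (cov μ (X ε) Y - V) / V := by
        rw [hlam_def, ← hV]
        field_simp
      rw [this, abs_div, abs_of_pos hVpos]
      exact (div_le_div_iff_of_pos_right hVpos).mpr (covbd ε)
    have hlim1 : Tendsto (fun ε => d ε * σ / V) (nhdsWithin 0 (Set.Ioi 0)) (nhds 0) := by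
      have := (hd.mul_const σ).div_const V
      simpa using this
    have hlamtend : Tendsto lam (nhdsWithin 0 (Set.Ioi 0)) (nhds 1) := by
      have h0 : Tendsto (fun ε => lam ε - 1) (nhdsWithin 0 (Set.Ioi 0)) (nhds 0) :=
        squeeze_zero_norm (fun ε => hlambd ε) hlim1
      have := h0.add_const 1
      simpa using this
    refine ⟨hlamtend, ?_⟩
    -- variance bound
    have varbd : ∀ ε, variance (fun ω => X ε ω - lam ε * (Y ω - mY)) μ
        ≤ (2 * (d ε + (d ε * σ / V) * σ)) ^ 2 := by
      intro ε
      set c : ℝ := lam ε with hc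
      set W : Ω → ℝ := fun ω => X ε ω - c * g ω with hWdef
      have hW : MemLp W 2 μ := (hX ε).sub (hg.const_mul c)
      set mW : ℝ := ∫ ω, W ω ∂μ with hmW
      have hWm : MemLp (fun ω => W ω - mW) 2 μ := hW.sub (memLp_const mW)
      have hvar : variance W μ = (eLpNorm (fun ω => W ω - mW) 2 μ).toReal ^ 2 := by
        rw [variance_eq_integral hW.aestronglyMeasurable.aemeasurable, ← normsq hWm]
      -- f1 = W - mY
      set f1 : Ω → ℝ := fun ω => W ω - mY with hf1def
      have hf1 : MemLp f1 2 μ := hW.sub (memLp_const mY)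
      have hintf1 : ∫ ω, f1 ω ∂μ = mW - mY := by
        rw [hf1def]
        rw [integral_sub (hW.integrable one_le_two) (integrable_const mY)]
        simp [hmW]
      set N1 : ℝ := (eLpNorm f1 2 μ).toReal with hN1
      have step1 : (eLpNorm (fun ω => W ω - mW) 2 μ).toReal ≤ 2 * N1 := by
        have heq : (fun ω => W ω - mW) = fun ω => f1 ω + (-(mW - mY)) := by
          funext ω; simp [hf1def]
        rw [heq]
        have h := Ntri hf1 (memLp_const (-(mW - mY)))
        have hcn : (eLpNorm (fun _ : Ω => -(mW - mY)) 2 μ).toReal = |mW - mY| := by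
          rw [eLpNorm_const _ two_ne_zero (NeZero.ne μ)]
          simp [ENNReal.toReal_mul, ENNReal.one_rpow, Real.norm_eq_abs, abs_sub_comm]
        have hmb : |mW - mY| ≤ N1 := by
          rw [← hintf1]; exact meanbd hf1
        calc (eLpNorm (fun ω => f1 ω + (-(mW - mY))) 2 μ).toReal
            ≤ N1 + (eLpNorm (fun _ : Ω => -(mW - mY)) 2 μ).toReal := h
          _ ≤ N1 + N1 := by rw [hcn]; linarith
          _ = 2 * N1 := by ring
      have step2 : N1 ≤ d ε + |c - 1| * σ := by
        have heq : f1 = fun ω => (X ε ω - Y ω) + (1 - c) * g ω := by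
          funext ω; simp [hf1def, hWdef, hgdef]; ring
        rw [hN1, heq]
        have h := Ntri ((hX ε).sub hY) (hg.const_mul (1 - c))
        calc (eLpNorm (fun ω => (X ε ω - Y ω) + (1 - c) * g ω) 2 μ).toReal
            ≤ d ε + (eLpNorm (fun ω => (1 - c) * g ω) 2 μ).toReal := h
          _ = d ε + |1 - c| * σ := by rw [Nconstmul]
          _ = d ε + |c - 1| * σ := by rw [abs_sub_comm]
      have hN1nn : 0 ≤ N1 := ENNReal.toReal_nonneg
      have hfinal : variance W μ ≤ (2 * (d ε + |c - 1| * σ)) ^ 2 := by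
        rw [hvar]
        have h1 : (eLpNorm (fun ω => W ω - mW) 2 μ).toReal ≤ 2 * (d ε + |c - 1| * σ) :=
          step1.trans (by linarith)
        exact pow_le_pow_left₀ ENNReal.toReal_nonneg h1 2
      have : variance W μ ≤ (2 * (d ε + (d ε * σ / V) * σ)) ^ 2 := by
        refine hfinal.trans ?_
        have := hlambd ε
        have h2 : 2 * (d ε + |c - 1| * σ) ≤ 2 * (d ε + (d ε * σ / V) * σ) := by
          have : |c - 1| * σ ≤ (d ε * σ / V) * σ := mul_le_mul_of_nonneg_right (hlambd ε) hσ0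
          linarith
        refine pow_le_pow_left₀ (by positivity) h2 2
      exact this
    have hB : Tendsto (fun ε => (2 * (d ε + (d ε * σ / V) * σ)) ^ 2)
        (nhdsWithin 0 (Set.Ioi 0)) (nhds 0) := by
      have h1 := ((hd.add (hlim1.mul_const σ)).const_mul 2).pow 2
      simpa using h1
    exact squeeze_zero (fun ε => variance_nonneg _ _) (fun ε => varbd ε) hB
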